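/- For every n ≥ 0 and every P ∈ D_n^{h,≥}, the number of occurrences of the factor UUD in P equals the number of occurrences of patterns of the form U F^k D (k ≥ 1, i.e. an up step followed by one or more flat steps followed by a down step) in φ(P), plus the number of occurrences of the factor UD in φ(P). -/

import Mathlib

inductive Step : Type
  | U | D | F
  deriving DecidableEq, Repr

open Step

/-- Number of occurrences of `p` as a factor (consecutive steps) of `w`. -/
def countFactor (p w : List Step) : ℕ :=
  w.tails.countP fun t => p.isPrefixOf t

/-- `w` is a Dyck path (word over {U,D} with as many U's as D's,
every prefix having at least as many U's as D's). -/
def IsDyck (w : List Step) : Prop :=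
  w.count F = 0 ∧ w.count U = w.count D ∧
    ∀ p : List Step, p <+: w → p.count D ≤ p.count U

/-- `w` is a Motzkin path. -/
def IsMotzkin (w : List Step) : Prop :=
  w.count U = w.count D ∧ ∀ p : List Step, p <+: w → p.count D ≤ p.count U

/-- The (maximal) height of a path. -/
def height (w : List Step) : ℕ :=
  (w.inits.map fun p => p.count U - p.count D).foldr max 0

/-- The set `D^{h,≥}` of Dyck paths with first return decomposition
`P = U α D β` satisfying `h(UαD) ≥ h(β)`, recursively. -/
inductive DH : List Step → Prop
  | nil : DH []
  | cons (α β : List Step) : DH α → DH β →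
      height (U :: (α ++ [D])) ≥ height β → DH (U :: (α ++ [D] ++ β))

/-- The map φ from `D^{h,≥}` to Motzkin paths, as a relation:
φ(ε)=ε, φ(αUD)=φ(α)F, φ(αUUβDγD)=φ(α)φ(γ)Uφ(β)D. -/
inductive Phi : List Step → List Step → Prop
  | nil : Phi [] []
  | flat (α a : List Step) : DH α → Phi α a →
      Phi (α ++ [U, D]) (a ++ [F])
  | up (α β γ a b c : List Step) : DH α → DH β → DH γ →
      Phi α a → Phi β b → Phi γ c →
      Phi (α ++ [U, U] ++ β ++ [D] ++ γ ++ [D]) (a ++ c ++ U :: (b ++ [D]))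

/-- Auxiliary: the list starts with one or more `F`'s followed by a `D`. -/
def fThenD : List Step → Bool
  | F :: D :: _ => true
  | F :: rest => fThenD rest
  | _ => false

/-- Auxiliary: the list starts with one or more `F`'s followed by a `U`. -/
def fThenU : List Step → Bool
  | F :: U :: _ => true
  | F :: rest => fThenU rest
  | _ => false

/-- Number of occurrences of factors of the form `U F^k D` with `k ≥ 1` in `w`. -/
def countUFD (w : List Step) : ℕ :=
  w.tails.countP fun t => match t with
    | U :: rest => fThenD rest
    | _ => false

/-- Number of occurrences of factors of the form `U F^k U` with `k ≥ 1` in `w`. -/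
def countUFU (w : List Step) : ℕ :=
  w.tails.countP fun t => match t with
    | U :: rest => fThenU rest
    | _ => false

/- ============ auxiliary definitions ============ -/

def sFD : List Step → Bool
  | D :: _ => true
  | F :: r => sFD r
  | _ => false

def allF : List Step → Bool
  | [] => true
  | F :: r => allF r
  | _ => false

def allUD : List Step → Bool
  | [] => true
  | U :: D :: r => allUD r
  | _ => false

def q3 : List Step → Bool
  | U :: U :: D :: _ => true
  | _ => false

def q2 : List Step → Bool
  | U :: D :: _ => true
  | _ => false

def predH : List Step → Bool
  | U :: r => sFD r
  | _ => false

def pUF : List Step → Bool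
  | U :: r => allF r
  | _ => false

def revFU : List Step → Bool
  | U :: _ => true
  | F :: r => revFU r
  | _ => false

def cP (w : List Step) : ℕ := w.tails.countP q3
def hM (w : List Step) : ℕ := w.tails.countP predH

/- ============ basic counting lemmas ============ -/

lemma master (q : List Step → Bool) (x y : List Step) :
    (x ++ y).tails.countP q + (if q y then 1 else 0)
      = x.tails.countP (fun t => q (t ++ y)) + y.tails.countP q := by
  induction x with
  | nil => simp [List.countP_cons]; omega
  | cons a x ih =>
    simp only [List.cons_append, List.tails_cons, List.countP_cons] at *
    omega

lemma countP_split {r p q : List Step → Bool} (l : List (List Step))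
    (hr : ∀ t, r t = (p t || q t)) (h : ∀ t, ¬(p t = true ∧ q t = true)) :
    l.countP r = l.countP p + l.countP q := by
  induction l with
  | nil => simp
  | cons a l ih =>
    simp only [List.countP_cons, ih, hr a]
    have := h a
    cases hp : p a <;> cases hq : q a <;> simp_all <;> omega

lemma countP_tails_eq (s x : List Step) :
    x.tails.countP (fun t => decide (t = s)) = if s <:+ x then 1 else 0 := by
  induction x with
  | nil =>
    by_cases h : s = ([] : List Step)
    · subst h; simp
    · rw [if_neg (by rw [List.suffix_nil]; exact h)]
      rw [List.countP_eq_zero]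
      intro t ht
      have ht2 := (List.mem_tails _ _).mp ht
      rw [List.suffix_nil] at ht2
      subst ht2
      simp only [decide_eq_true_eq]
      exact fun e => h e.symm
  | cons a x ih =>
    rw [List.tails_cons, List.countP_cons, ih]
    by_cases h : s = a :: x
    · subst h
      have hns : ¬ ((a :: x) <:+ x) := by
        intro hs
        have := hs.length_le
        simp at this
      simp [hns, List.suffix_cons_iff]
    · have hd : (decide (a :: x = s)) = false := by
        simp only [decide_eq_false_iff_not]
        exact fun e => h e.symm
      rw [hd]
      simp only [List.suffix_cons_iff]
      by_cases h2 : s <:+ x <;> simp [h, h2]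

lemma q3_eq (t : List Step) : ([U,U,D] : List Step).isPrefixOf t = q3 t := by
  match t with
  | [] => rfl
  | [a] => cases a <;> rfl
  | [a,b] => cases a <;> cases b <;> rfl
  | a :: b :: c :: r => cases a <;> cases b <;> cases c <;> simp [List.isPrefixOf, q3]

lemma q2_eq (t : List Step) : ([U,D] : List Step).isPrefixOf t = q2 t := by
  match t with
  | [] => rfl
  | [a] => cases a <;> rfl
  | a :: b :: r => cases a <;> cases b <;> simp [List.isPrefixOf, q2]

lemma countFactor_UUD (w : List Step) : countFactor [U,U,D] w = cP w :=
  List.countP_congr fun t _ => by rw [q3_eq]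

lemma countFactor_UD (w : List Step) : countFactor [U,D] w = w.tails.countP q2 :=
  List.countP_congr fun t _ => by rw [q2_eq]

/- ============ small step lemmas ============ -/

lemma allF_append (x y : List Step) : allF (x ++ y) = (allF x && allF y) := by
  induction x with
  | nil => simp [allF]
  | cons a x ih => cases a <;> simp [allF, ih]

lemma allF_reverse (l : List Step) : allF l.reverse = allF l := by
  induction l with
  | nil => rfl
  | cons a l ih =>
    rw [List.reverse_cons, allF_append, ih]
    cases a <;> cases h : allF l <;> simp [allF, h]

lemma sFD_append (x y : List Step) : sFD (x ++ y) = (if allF x then sFD y else sFD x) := by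
  induction x with
  | nil => simp [allF]
  | cons a x ih => cases a <;> simp [sFD, allF, ih] <;> exact if_congr Iff.rfl rfl rfl

lemma sFD_allF {x : List Step} (h : allF x = true) : sFD x = false := by
  induction x with
  | nil => rfl
  | cons a x ih => cases a <;> simp [allF] at h <;> simp [sFD, ih, h]

lemma predH_append {y : List Step} (hy : sFD y = false) (t : List Step) :
    predH (t ++ y) = (predH t || (decide (t = []) && predH y)) := by
  match t with
  | [] => simp [predH]
  | U :: r =>
    have h1 : predH ((U :: r) ++ y) = sFD (r ++ y) := rfl
    have h2 : predH (U :: r) = sFD r := rfl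
    rw [h1, h2, sFD_append]
    by_cases h : allF r = true <;> simp [h, hy, sFD_allF]
  | D :: r => rfl
  | F :: r => rfl

lemma predH_append_D (t : List Step) : predH (t ++ [D]) = (predH t || pUF t) := by
  match t with
  | [] => rfl
  | U :: r =>
    have h1 : predH ((U :: r) ++ [D]) = sFD (r ++ [D]) := rfl
    have h2 : predH (U :: r) = sFD r := rfl
    have h3 : pUF (U :: r) = allF r := rfl
    rw [h1, h2, h3, sFD_append]
    by_cases h : allF r = true <;> simp [h, sFD_allF, sFD]
  | D :: r => rfl
  | F :: r => rfl

theorem fThenD_F : ∀ r, fThenD (F :: r) = sFD r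
  | [] => rfl
  | D :: r => rfl
  | U :: r => rfl
  | F :: r => by
      rw [show fThenD (F :: F :: r) = fThenD (F :: r) from rfl, fThenD_F r]; rfl

lemma predH_split (t : List Step) :
    predH t = ((match t with | U :: rest => fThenD rest | _ => false) || q2 t) := by
  match t with
  | [] => rfl
  | [U] => rfl
  | U :: D :: r => rfl
  | U :: U :: r => rfl
  | U :: F :: r =>
    show sFD (F :: r) = (fThenD (F :: r) || q2 (U :: F :: r))
    rw [fThenD_F]
    show sFD r = (sFD r || false)
    simp
  | D :: r => rfl
  | F :: r => rfl

lemma predH_split_disj (t : List Step) :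
    ¬((match t with | U :: rest => fThenD rest | _ => false) = true ∧ q2 t = true) := by
  match t with
  | [] => simp
  | [U] => simp [q2]
  | U :: D :: r => simp [fThenD]
  | U :: U :: r => simp [q2]
  | U :: F :: r => simp [q2]
  | D :: r => simp
  | F :: r => simp [q2]

lemma hM_split (w : List Step) : hM w = countUFD w + countFactor [U,D] w := by
  rw [countFactor_UD, countUFD, hM]
  exact countP_split _ predH_split predH_split_disj

/- ============ cons lemmas ============ -/

lemma hM_cons (a : Step) (l : List Step) :
    hM (a :: l) = hM l + (if predH (a :: l) then 1 else 0) := by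
  simp [hM, List.tails_cons, List.countP_cons]

lemma cP_cons (a : Step) (l : List Step) :
    cP (a :: l) = cP l + (if q3 (a :: l) then 1 else 0) := by
  simp [cP, List.tails_cons, List.countP_cons]

/- ============ hM append lemmas ============ -/

lemma hM_append {y : List Step} (hy : sFD y = false) (x : List Step) :
    hM (x ++ y) = hM x + hM y := by
  have hm := master predH x y
  have hc : x.tails.countP (fun t => predH (t ++ y))
      = x.tails.countP predH + x.tails.countP (fun t => decide (t = []) && predH y) :=
    countP_split _ (fun t => predH_append hy t) (by
      intro t ht
      rcases ht with ⟨h1, h2⟩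
      simp only [Bool.and_eq_true, decide_eq_true_eq] at h2
      rw [h2.1] at h1
      exact absurd h1 (by simp [predH]))
  have he : x.tails.countP (fun t => decide (t = []) && predH y)
      = if predH y = true then 1 else 0 := by
    cases hpy : predH y with
    | true =>
      simp only [Bool.and_true]
      rw [countP_tails_eq, if_pos List.nil_suffix]
      simp
    | false =>
      simp only [Bool.and_false]
      rw [List.countP_eq_zero.mpr (by intro a _; simp)]
      simp
  rw [hc, he] at hm
  show (x ++ y).tails.countP predH = x.tails.countP predH + y.tails.countP predH
  omega

lemma revFU_allF_append {x : List Step} (hx : allF x = true) (z : List Step) :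
    revFU (x ++ U :: z) = true := by
  induction x with
  | nil => rfl
  | cons a x ih => cases a <;> simp [allF] at hx <;> simp [revFU, ih, hx]

lemma phi_revFU {β b : List Step} (h : Phi β b) : revFU b.reverse = false := by
  induction h with
  | nil => rfl
  | flat α a _ _ ih =>
    rw [List.reverse_append]
    show revFU (F :: a.reverse) = false
    rw [show revFU (F :: a.reverse) = revFU a.reverse from rfl]
    exact ih
  | up α β γ a b c _ _ _ _ _ _ iha ihb ihc =>
    rw [show a ++ c ++ U :: (b ++ [D]) = (a ++ c ++ U :: b) ++ [D] by simp]
    rw [List.reverse_append]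
    rfl

lemma phi_pUF_suffix {β b : List Step} (h : Phi β b) :
    ∀ t, t <:+ b → pUF t = false := by
  intro t ht
  cases hc : pUF t with
  | false => rfl
  | true =>
    exfalso
    match t, hc with
    | U :: r, hc =>
      have hr : allF r = true := hc
      rcases ht with ⟨s, rfl⟩
      have hrev : revFU (s ++ U :: r).reverse = true := by
        rw [List.reverse_append, List.reverse_cons, List.append_assoc,
          List.singleton_append]
        exact revFU_allF_append (by rw [allF_reverse]; exact hr) _
      rw [phi_revFU h] at hrev
      exact absurd hrev (by simp)

lemma phi_sFD {γ c : List Step} (h : Phi γ c) : sFD c = false := by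
  induction h with
  | nil => rfl
  | flat α a _ _ ih =>
    rw [sFD_append]
    split
    · rfl
    · exact ih
  | up α β γ a b c _ _ _ _ _ _ iha ihb ihc =>
    rw [show a ++ c ++ U :: (b ++ [D]) = a ++ (c ++ U :: (b ++ [D])) by simp,
      sFD_append, sFD_append]
    split
    · split
      · rfl
      · exact ihc
    · exact iha

lemma hM_append_D {b : List Step} (hb : ∀ t, t <:+ b → pUF t = false) :
    hM (b ++ [D]) = hM b := by
  have hm := master predH b [D]
  have hc : b.tails.countP (fun t => predH (t ++ [D]))
      = b.tails.countP predH + b.tails.countP pUF :=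
    countP_split _ (fun t => predH_append_D t) (by
      intro t ht
      rcases ht with ⟨h1, h2⟩
      match t, h1, h2 with
      | U :: r, h1, h2 =>
        have h3 := sFD_allF (x := r) h2
        rw [show predH (U :: r) = sFD r from rfl, h3] at h1
        exact absurd h1 (by simp))
  have h0 : b.tails.countP pUF = 0 := by
    rw [List.countP_eq_zero]
    intro t ht
    simp [hb t ((List.mem_tails _ _).mp ht)]
  rw [hc, h0] at hm
  rw [show (if predH [D] = true then (1:ℕ) else 0) = 0 from rfl] at hm
  rw [show ([D] : List Step).tails.countP predH = 0 from rfl] at hm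
  show (b ++ [D]).tails.countP predH = b.tails.countP predH
  omega

/- ============ cP append lemmas ============ -/

lemma q3_append_UD (t : List Step) : q3 (t ++ [U,D]) = (q3 t || decide (t = [U])) := by
  match t with
  | [] => rfl
  | [a] => cases a <;> rfl
  | [a,b] => cases a <;> cases b <;> rfl
  | a :: b :: c :: r => cases a <;> cases b <;> cases c <;> simp [q3]

lemma q3_append_Dcons (t r : List Step) : q3 (t ++ D :: r) = (q3 t || decide (t = [U,U])) := by
  match t with
  | [] => rfl
  | [a] => cases a <;> rfl
  | [a,b] => cases a <;> cases b <;> rfl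
  | a :: b :: c :: s => cases a <;> cases b <;> cases c <;> simp [q3]

lemma q3_append_UUcons (t r : List Step) :
    q3 (t ++ U :: U :: r) = (q3 t || (decide (t = []) && q3 (U :: U :: r))) := by
  match t with
  | [] => simp [q3]
  | [a] => cases a <;> rfl
  | [a,b] => cases a <;> cases b <;> rfl
  | a :: b :: c :: s => cases a <;> cases b <;> cases c <;> simp [q3]

lemma cP_append_UD {x : List Step} (hx : ¬ ([U] <:+ x)) : cP (x ++ [U,D]) = cP x := by
  have hm := master q3 x [U,D]
  have hc : x.tails.countP (fun t => q3 (t ++ [U,D]))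
      = x.tails.countP q3 + x.tails.countP (fun t => decide (t = [U])) :=
    countP_split _ (fun t => q3_append_UD t) (by
      intro t ht
      rcases ht with ⟨h1, h2⟩
      simp only [decide_eq_true_eq] at h2
      subst h2
      exact absurd h1 (by simp [q3]))
  rw [hc, countP_tails_eq, if_neg hx] at hm
  rw [show (if q3 [U,D] = true then (1:ℕ) else 0) = 0 from rfl] at hm
  rw [show ([U,D] : List Step).tails.countP q3 = 0 from rfl] at hm
  show (x ++ [U,D]).tails.countP q3 = x.tails.countP q3
  omega

lemma cP_append_Dcons {x : List Step} (s : List Step) (hx : ¬ ([U,U] <:+ x)) :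
    cP (x ++ D :: s) = cP x + cP (D :: s) := by
  have hm := master q3 x (D :: s)
  have hc : x.tails.countP (fun t => q3 (t ++ D :: s))
      = x.tails.countP q3 + x.tails.countP (fun t => decide (t = [U,U])) :=
    countP_split _ (fun t => q3_append_Dcons t s) (by
      intro t ht
      rcases ht with ⟨h1, h2⟩
      simp only [decide_eq_true_eq] at h2
      subst h2
      exact absurd h1 (by simp [q3]))
  rw [hc, countP_tails_eq, if_neg hx] at hm
  rw [show (if q3 (D :: s) = true then (1:ℕ) else 0) = 0 from rfl] at hm
  show (x ++ D :: s).tails.countP q3 = x.tails.countP q3 + (D :: s).tails.countP q3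
  omega

lemma cP_append_UUcons (x s : List Step) :
    cP (x ++ U :: U :: s) = cP x + cP (U :: U :: s) := by
  have hm := master q3 x (U :: U :: s)
  have hc : x.tails.countP (fun t => q3 (t ++ U :: U :: s))
      = x.tails.countP q3 + x.tails.countP (fun t => decide (t = []) && q3 (U :: U :: s)) :=
    countP_split _ (fun t => q3_append_UUcons t s) (by
      intro t ht
      rcases ht with ⟨h1, h2⟩
      simp only [Bool.and_eq_true, decide_eq_true_eq] at h2
      rw [h2.1] at h1
      exact absurd h1 (by simp [q3]))
  have he : x.tails.countP (fun t => decide (t = []) && q3 (U :: U :: s))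
      = if q3 (U :: U :: s) = true then 1 else 0 := by
    cases hq : q3 (U :: U :: s) with
    | true =>
      simp only [Bool.and_true]
      rw [countP_tails_eq, if_pos List.nil_suffix]
      simp
    | false =>
      simp only [Bool.and_false]
      rw [List.countP_eq_zero.mpr (by intro a _; simp)]
      simp
  rw [hc, he] at hm
  show (x ++ U :: U :: s).tails.countP q3
      = x.tails.countP q3 + (U :: U :: s).tails.countP q3
  omega

/- ============ DH structure lemmas ============ -/

lemma dh_inv {w : List Step} (h : DH w) :
    w = [] ∨ ∃ α β, DH α ∧ DH β ∧ height (U :: (α ++ [D])) ≥ height β ∧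
      w = U :: (α ++ [D] ++ β) := by
  cases h with
  | nil => exact Or.inl rfl
  | cons α β h1 h2 h3 => exact Or.inr ⟨α, β, h1, h2, h3, rfl⟩

lemma dh_head {w : List Step} (h : DH w) : w = [] ∨ ∃ r, w = U :: r := by
  cases h with
  | nil => exact Or.inl rfl
  | cons α β _ _ _ => exact Or.inr ⟨_, rfl⟩

lemma dh_last {w : List Step} (h : DH w) : w = [] ∨ [D] <:+ w := by
  induction h with
  | nil => exact Or.inl rfl
  | cons α β hα hβ hgt ihα ihβ =>
    right
    rcases ihβ with rfl | hsuf
    · exact ⟨U :: α, by simp⟩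
    · exact hsuf.trans ⟨U :: (α ++ [D]), by simp⟩

lemma dh_not_sufU {w : List Step} (h : DH w) : ¬ ([U] <:+ w) := by
  intro hU
  rcases dh_last h with rfl | hD
  · simp [List.suffix_nil] at hU
  · rcases hU with ⟨t1, h1⟩
    rcases hD with ⟨t2, h2⟩
    rw [← h1] at h2
    have := congrArg List.getLast? h2
    simp [List.getLast?_concat] at this

lemma dh_not_sufUU {w : List Step} (h : DH w) : ¬ ([U,U] <:+ w) := by
  intro hs
  exact dh_not_sufU h (List.IsSuffix.trans ⟨[U], rfl⟩ hs)

lemma dh_not_singleU : ¬ DH [U] := by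
  intro h
  rcases dh_inv h with h0 | ⟨α, β, _, _, _, heq⟩
  · simp at h0
  · have := congrArg List.length heq
    simp at this

/- ============ height lemmas ============ -/

lemma le_foldr_max {a : ℕ} {l : List ℕ} (h : a ∈ l) : a ≤ l.foldr max 0 := by
  induction l with
  | nil => simp at h
  | cons b l ih =>
    rcases List.mem_cons.mp h with rfl | h'
    · exact le_max_left _ _
    · exact le_trans (ih h') (le_max_right _ _)

lemma foldr_max_le {N : ℕ} {l : List ℕ} (h : ∀ a ∈ l, a ≤ N) : l.foldr max 0 ≤ N := by
  induction l with
  | nil => simp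
  | cons b l ih =>
    exact max_le (h b (by simp)) (ih fun a ha => h a (by simp [ha]))

lemma height_ge {p w : List Step} (h : p <+: w) : p.count U - p.count D ≤ height w :=
  le_foldr_max (List.mem_map.mpr ⟨p, (List.mem_inits _ _).mpr h, rfl⟩)

lemma height_le {w : List Step} {N : ℕ}
    (h : ∀ p, p <+: w → p.count U - p.count D ≤ N) : height w ≤ N :=
  foldr_max_le (by
    intro a ha
    rcases List.mem_map.mp ha with ⟨p, hp, rfl⟩
    exact h p ((List.mem_inits _ _).mp hp))

lemma height_suffix_bal {x w : List Step} (hx : x.count U = x.count D) :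
    height w ≤ height (x ++ w) := by
  apply height_le
  intro p hp
  have he : (x ++ p).count U - (x ++ p).count D = p.count U - p.count D := by
    simp [List.count_append]
    omega
  rw [← he]
  apply height_ge
  rcases hp with ⟨t, rfl⟩
  exact ⟨t, by simp⟩

lemma dh_low {w : List Step} (h : DH w) : height w ≤ 1 → allUD w = true := by
  induction h with
  | nil => intro _; rfl
  | cons α β hα hβ hgt ihα ihβ =>
    intro hh
    rcases dh_head hα with rfl | ⟨r, rfl⟩
    · have hw : U :: (([] : List Step) ++ [D] ++ β) = [U,D] ++ β := rfl
      rw [hw] at hh ⊢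
      have hβh : height β ≤ 1 :=
        le_trans (height_suffix_bal (by decide : ([U,D] : List Step).count U = [U,D].count D)) hh
      have := ihβ hβh
      simpa [allUD] using this
    · exfalso
      have h2 : ([U,U] : List Step) <+: U :: ((U :: r) ++ [D] ++ β) := ⟨r ++ [D] ++ β, by simp⟩
      have h3 := height_ge h2
      have h4 : ([U,U] : List Step).count U - ([U,U] : List Step).count D = 2 := by decide
      omega

lemma dh_low_cons {r' : List Step} (h : DH (U :: D :: r')) : allUD r' = true := by
  rcases dh_inv h with h0 | ⟨α, β₂, hα, hβ₂, hgt, heq⟩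
  · simp at h0
  · have heq2 : D :: r' = α ++ [D] ++ β₂ := by
      injection heq
    rcases dh_head hα with rfl | ⟨r₂, rfl⟩
    · have hr : r' = β₂ := by simpa using heq2
      have h1 : height (U :: (([] : List Step) ++ [D])) = 1 := by decide
      rw [h1] at hgt
      rw [hr]
      exact dh_low hβ₂ hgt
    · exfalso
      have : D = U := by
        have := congrArg (fun l => l.head?) heq2
        simpa using this
      exact absurd this (by simp)

lemma dh_combine {β : List Step} (h : DH β) :
    ((if β = [] then 1 else 0) + (if q2 β then 1 else 0) : ℕ)
      = (if allUD β then 1 else 0) := by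
  rcases dh_head h with rfl | ⟨r, rfl⟩
  · rfl
  · have hne : (U :: r : List Step) ≠ [] := by simp
    rw [if_neg hne]
    match r with
    | [] => exact absurd h dh_not_singleU
    | D :: r' =>
      have h1 : q2 (U :: D :: r') = true := rfl
      have h2 : allUD (U :: D :: r') = allUD r' := rfl
      rw [h1, h2, dh_low_cons h]
      rfl
    | U :: r' => rfl
    | F :: r' => rfl

/- ============ allUD / allF transport ============ -/

theorem allUD_append_UD : ∀ (x : List Step), allUD (x ++ [U,D]) = allUD x
  | [] => rfl
  | [U] => rfl
  | U :: D :: r => by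
      rw [show allUD ((U :: D :: r) ++ [U,D]) = allUD (r ++ [U,D]) from rfl,
        allUD_append_UD r]
      rfl
  | U :: U :: r => rfl
  | U :: F :: r => rfl
  | D :: r => rfl
  | F :: r => rfl

theorem allUD_no_UU : ∀ (x r : List Step), allUD (x ++ U :: U :: r) = false
  | [], r => rfl
  | [U], r => rfl
  | U :: D :: x, r => by
      rw [show allUD ((U :: D :: x) ++ U :: U :: r) = allUD (x ++ U :: U :: r) from rfl,
        allUD_no_UU x r]
  | U :: U :: x, r => rfl
  | U :: F :: x, r => rfl
  | D :: x, r => rfl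
  | F :: x, r => rfl

lemma phi_allF_allUD {β b : List Step} (h : Phi β b) : allF b = allUD β := by
  induction h with
  | nil => rfl
  | flat α a _ _ ih =>
    rw [allF_append, allUD_append_UD, ih]
    cases allUD α <;> rfl
  | up α β γ a b c _ _ _ _ _ _ iha ihb ihc =>
    have h1 : allF (a ++ c ++ U :: (b ++ [D])) = false := by
      rw [allF_append]
      simp [allF]
    have h2 : allUD (α ++ [U,U] ++ β ++ [D] ++ γ ++ [D]) = false := by
      rw [show α ++ [U,U] ++ β ++ [D] ++ γ ++ [D]
          = α ++ U :: U :: (β ++ [D] ++ γ ++ [D]) by simp]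
      exact allUD_no_UU _ _
    rw [h1, h2]

/- ============ main lemma ============ -/

lemma phi_main {P m : List Step} (h : Phi P m) : cP P = hM m := by
  induction h with
  | nil => rfl
  | flat α a hα _ ih =>
    have hR : hM (a ++ [F]) = hM a := by
      rw [hM_append (y := [F]) rfl a]
      rfl
    rw [cP_append_UD (dh_not_sufU hα), hR, ih]
  | up α β γ a b c hα hβ hγ hφa hφb hφc iha ihb ihc =>
    have hP : α ++ [U,U] ++ β ++ [D] ++ γ ++ [D]
        = α ++ U :: U :: (β ++ D :: (γ ++ [D])) := by simp
    have e1 : cP (γ ++ [D]) = cP γ := by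
      have h0 := cP_append_Dcons (x := γ) [] (dh_not_sufUU hγ)
      have h1 : cP ([D] : List Step) = 0 := rfl
      rw [h1] at h0
      simpa using h0
    have e3 : cP (β ++ D :: (γ ++ [D])) = cP β + cP γ := by
      rw [cP_append_Dcons (x := β) _ (dh_not_sufUU hβ), cP_cons]
      have h1 : q3 (D :: (γ ++ [D])) = false := rfl
      rw [h1, e1]
      simp
    have e4a : q3 (U :: U :: (β ++ D :: (γ ++ [D]))) = decide (β = []) := by
      rcases dh_head hβ with rfl | ⟨r, rfl⟩
      · rfl
      · simp [q3]
    have e4b : q3 (U :: (β ++ D :: (γ ++ [D]))) = q2 β := by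
      match β with
      | [] => rfl
      | [U] => exact absurd hβ dh_not_singleU
      | [D] => rfl
      | [F] => rfl
      | x :: y :: r => cases x <;> cases y <;> rfl
    have eL : cP (α ++ [U,U] ++ β ++ [D] ++ γ ++ [D])
        = cP α + cP β + cP γ
          + ((if β = [] then 1 else 0) + (if q2 β then 1 else 0)) := by
      rw [hP, cP_append_UUcons, cP_cons, cP_cons, e3, e4a, e4b]
      by_cases hb0 : β = [] <;> cases hq : q2 β <;> simp [hb0, hq] <;> omega
    have f1 : hM (b ++ [D]) = hM b := hM_append_D (phi_pUF_suffix hφb)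
    have f2 : predH (U :: (b ++ [D])) = allF b := by
      show sFD (b ++ [D]) = allF b
      rw [sFD_append]
      by_cases hb : allF b = true <;> simp [hb, phi_sFD hφb, sFD]
    have f4 : sFD (c ++ U :: (b ++ [D])) = false := by
      rw [sFD_append]
      split
      · rfl
      · exact phi_sFD hφc
    have eR : hM (a ++ c ++ U :: (b ++ [D]))
        = hM a + hM c + hM b + (if allF b then 1 else 0) := by
      rw [show a ++ c ++ U :: (b ++ [D]) = a ++ (c ++ U :: (b ++ [D])) by simp]
      rw [hM_append f4, hM_append (y := U :: (b ++ [D])) rfl, hM_cons, f2, f1]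
      omega
    rw [eL, eR, iha, ihb, ihc, dh_combine hβ]
    rw [phi_allF_allUD hφb]
    omega


/-- φ transports UUD: #UUD(P) = #UF⁺D(φP) + #UD(φP). -/
theorem stmt13 (n : ℕ) (P m : List Step) (hP : DH P) (hlen : P.length = 2 * n)
    (hphi : Phi P m) :
    countFactor [Step.U, Step.U, Step.D] P =
      countUFD m + countFactor [Step.U, Step.D] m := by
  rw [countFactor_UUD, phi_main hphi, hM_split]
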